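/- The number of inversions of w, i.e. the cardinality of {(a,b) : 1 ≤ a < b ≤ n and w⁻¹(a) > w⁻¹(b)}, equals r + (q−1)·r(r+1)/2. -/

import Mathlib

private lemma gauss_aux (r : ℕ) : 2 * (∑ i ∈ Finset.Icc 1 r, i) = r * (r + 1) := by
  induction r with
  | zero => simp
  | succ m ih =>
    rw [Finset.sum_Icc_succ_top (by omega), Nat.mul_add, ih]
    ring

/-- The number of inversions of `w`, i.e. the cardinality of
`{(a,b) : 1 ≤ a < b ≤ n and w⁻¹(a) > w⁻¹(b)}`, equals `r + (q−1)·r(r+1)/2`.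
Here `n = rq+1`, `r ≥ 1`, `q ≥ 2`, and `w = w_{r,n}` is the permutation of `{1,…,n}` with
`w(j) = jq+1` for `1 ≤ j ≤ r` and increasing on `{r+1,…,n}`. -/
theorem stmt_2 (r q : ℕ) (hr : 1 ≤ r) (hq : 2 ≤ q) (n : ℕ) (hn : n = r * q + 1)
    (w : Equiv.Perm ℕ)
    (hfix : ∀ k, k ∉ Finset.Icc 1 n → w k = k)
    (hw : ∀ j, 1 ≤ j → j ≤ r → w j = j * q + 1)
    (hmono : ∀ a b, r + 1 ≤ a → a < b → b ≤ n → w a < w b) :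
    ((Finset.Icc 1 n ×ˢ Finset.Icc 1 n).filter
        (fun p => p.1 < p.2 ∧ w.symm p.2 < w.symm p.1)).card
      = r + (q - 1) * (r * (r + 1)) / 2 := by
  have hq1 : 1 ≤ q := by omega
  have hwmem : ∀ k ∈ Finset.Icc 1 n, w k ∈ Finset.Icc 1 n := by
    intro k hk
    by_contra h
    have h2 : w k = k := w.injective (hfix _ h)
    rw [h2] at h; exact h hk
  have hsymmem : ∀ k ∈ Finset.Icc 1 n, w.symm k ∈ Finset.Icc 1 n := by
    intro k hk
    by_contra h
    have h2 := hfix _ h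
    have h3 : k = w.symm k := by
      conv_lhs => rw [← w.apply_symm_apply k]
      rw [h2]
    rw [← h3] at h; exact h hk
  -- Step 1: reindex the inversion set by positions.
  have hST : ((Finset.Icc 1 n ×ˢ Finset.Icc 1 n).filter
        (fun p => p.1 < p.2 ∧ w.symm p.2 < w.symm p.1)).card
      = ((Finset.Icc 1 n ×ˢ Finset.Icc 1 n).filter
        (fun p => p.1 < p.2 ∧ w p.2 < w p.1)).card := by
    apply Finset.card_nbij' (fun p => (w.symm p.2, w.symm p.1))
        (fun p => (w p.2, w p.1))
    · intro p hp
      simp only [Finset.mem_coe, Finset.mem_filter, Finset.mem_product] at hp ⊢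
      obtain ⟨⟨h1, h2⟩, h3, h4⟩ := hp
      refine ⟨⟨hsymmem _ h2, hsymmem _ h1⟩, h4, ?_⟩
      simpa using h3
    · intro p hp
      simp only [Finset.mem_coe, Finset.mem_filter, Finset.mem_product] at hp ⊢
      obtain ⟨⟨h1, h2⟩, h3, h4⟩ := hp
      refine ⟨⟨hwmem _ h2, hwmem _ h1⟩, h4, ?_⟩
      simpa using h3
    · intro p _; simp
    · intro p _; simp
  rw [hST]
  -- Step 2: express as a sum over the first coordinate.
  rw [Finset.card_filter, Finset.sum_product]
  have hinner : ∀ i, (∑ j ∈ Finset.Icc 1 n,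
      if ((i, j).1 < (i, j).2 ∧ w (i, j).2 < w (i, j).1) then 1 else 0)
      = ((Finset.Icc 1 n).filter (fun j => i < j ∧ w j < w i)).card := by
    intro i
    rw [Finset.card_filter]
  simp only [hinner]
  -- Step 3: count, for each i, the number of inversions starting at position i.
  have hzero : ∀ i ∈ Finset.Icc 1 n, r + 1 ≤ i →
      ((Finset.Icc 1 n).filter (fun j => i < j ∧ w j < w i)).card = 0 := by
    intro i hi hri
    rw [Finset.card_eq_zero, Finset.filter_eq_empty_iff]
    intro j hj
    simp only [Finset.mem_Icc] at hj
    rintro ⟨h1, h2⟩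
    exact absurd (hmono i j hri h1 hj.2) (by omega)
  have hcount : ∀ i ∈ Finset.Icc 1 r,
      ((Finset.Icc 1 n).filter (fun j => i < j ∧ w j < w i)).card
        = i * (q - 1) + 1 := by
    intro i hi
    classical
    simp only [Finset.mem_Icc] at hi
    have hwi : w i = i * q + 1 := hw i hi.1 hi.2
    -- bijection with the set V of allowed values below i*q+1
    have hbij : ((Finset.Icc 1 n).filter (fun j => i < j ∧ w j < w i)).card
        = ((Finset.Icc 1 (i * q)).filter
            (fun m => ∀ i', 1 ≤ i' → i' ≤ r → m ≠ i' * q + 1)).card := by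
      apply Finset.card_nbij (fun j => w j)
      · intro j hj
        simp only [Finset.mem_coe, Finset.mem_filter, Finset.mem_Icc] at hj ⊢
        obtain ⟨⟨hj1, hj2⟩, hij, hlt⟩ := hj
        have hwj := hwmem j (by simp only [Finset.mem_Icc]; exact ⟨hj1, hj2⟩)
        simp only [Finset.mem_Icc] at hwj
        refine ⟨⟨hwj.1, by omega⟩, ?_⟩
        intro i' h1 h2 heq
        have : w j = w i' := by rw [heq, hw i' h1 h2]
        have hji : j = i' := w.injective this
        subst hji
        rw [hw j h1 h2] at hlt
        rw [hwi] at hlt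
        have : j * q < i * q := by omega
        have : j < i := by
          by_contra hc
          push_neg at hc
          exact absurd (Nat.mul_le_mul_right q hc) (by omega)
        omega
      · intro a _ b _ hab; exact w.injective hab
      · intro m hm
        simp only [Finset.coe_filter, Finset.mem_Icc, Set.mem_setOf_eq] at hm ⊢
        obtain ⟨⟨hm1, hm2⟩, hmne⟩ := hm
        refine ⟨w.symm m, ?_, w.apply_symm_apply m⟩
        have hmn : m ∈ Finset.Icc 1 n := by
          simp only [Finset.mem_Icc]
          have : i * q ≤ r * q := Nat.mul_le_mul_right q hi.2
          omega
        have hj := hsymmem m hmn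
        simp only [Finset.mem_Icc] at hj
        have hij : i < w.symm m := by
          by_contra hc
          push_neg at hc
          have : w (w.symm m) = (w.symm m) * q + 1 := hw _ hj.1 (by omega)
          rw [w.apply_symm_apply] at this
          exact hmne _ hj.1 (by omega) this
        refine ⟨⟨hj.1, hj.2⟩, hij, ?_⟩
        rw [w.apply_symm_apply, hwi]; omega
    rw [hbij]
    -- count the value set
    have hVeq : (Finset.Icc 1 (i * q)).filter
            (fun m => ∀ i', 1 ≤ i' → i' ≤ r → m ≠ i' * q + 1)
        = Finset.Icc 1 (i * q) \ (Finset.Icc 1 (i - 1)).image (fun k => k * q + 1) := by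
      ext m
      simp only [Finset.mem_filter, Finset.mem_sdiff, Finset.mem_Icc, Finset.mem_image,
        not_exists]
      constructor
      · rintro ⟨⟨h1, h2⟩, h3⟩
        refine ⟨⟨h1, h2⟩, ?_⟩
        push_neg
        intro k hk
        exact (h3 k (by omega) (by omega)).symm
      · rintro ⟨⟨h1, h2⟩, h3⟩
        refine ⟨⟨h1, h2⟩, ?_⟩
        intro i' hi1 hi2 heq
        have hlt : i' < i := by
          have : i' * q + 1 ≤ i * q := by omega
          by_contra hc
          push_neg at hc
          exact absurd (Nat.mul_le_mul_right q hc) (by omega)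
        exact h3 i' ⟨⟨hi1, by omega⟩, heq.symm⟩
    rw [hVeq, Finset.card_sdiff_of_subset, Finset.card_image_of_injective, Nat.card_Icc, Nat.card_Icc]
    · have h1 : i ≤ i * q := Nat.le_mul_of_pos_right i (by omega)
      have h2 : i * (q - 1) + i = i * q := by
        rw [← Nat.mul_succ]
        congr 1
        omega
      omega
    · intro a b hab
      have hab' : a * q + 1 = b * q + 1 := hab
      exact Nat.eq_of_mul_eq_mul_right (show 0 < q by omega) (by omega)
    · intro m hm
      simp only [Finset.mem_image, Finset.mem_Icc] at hm ⊢
      obtain ⟨k, ⟨hk1, hk2⟩, rfl⟩ := hm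
      have h1 : k * q ≤ (i - 1) * q := Nat.mul_le_mul_right q hk2
      have h2 : (i - 1) * q + q = i * q := by
        rw [← Nat.succ_mul]
        congr 1
        omega
      omega
  -- Step 4: sum over i
  have hsub : Finset.Icc 1 r ⊆ Finset.Icc 1 n := by
    apply Finset.Icc_subset_Icc_right
    have : r * 1 ≤ r * q := Nat.mul_le_mul_left r hq1
    omega
  rw [← Finset.sum_subset hsub (fun i hi hri => hzero i hi (by
      simp only [Finset.mem_Icc] at hi hri ⊢; omega))]
  rw [Finset.sum_congr rfl hcount]
  -- Step 5: arithmetic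
  have hgauss := gauss_aux r
  rw [Finset.sum_add_distrib, Finset.sum_const, Nat.card_Icc, ← Finset.sum_mul]
  set s := ∑ i ∈ Finset.Icc 1 r, i with hs
  have h1 : (q - 1) * (r * (r + 1)) = 2 * ((q - 1) * s) := by
    rw [← hgauss]; ring
  rw [h1, Nat.mul_div_cancel_left _ (by norm_num : 0 < 2), mul_comm s (q - 1)]
  simp only [smul_eq_mul, mul_one]
  omega
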